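/- Let E_1,…,E_r be subsets of {x_1,…,x_n} and, for each i, let M'_i and m_i be monomials in K[x_1,…,x_n] such that every variable dividing M'_i lies in E_i and no variable dividing m_i lies in E_i. Set M_i = M'_i·m_i, let I_i be the principal L_{E_i}-Borel ideal generated by M_i and I'_i the principal L_{E_i}-Borel ideal generated by M'_i. Then there is a K-algebra isomorphism between the multi-Rees algebras R[I_1t_1,…,I_rt_r] and R[I'_1t_1,…,I'_rt_r], and a K-algebra isomorphism between the multi-fiber rings K[I_1t_1,…,I_rt_r] and K[I'_1t_1,…,I'_rt_r]. -/

import Mathlib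

/-- An `L_U`-Borel move: replace one factor `x_j` of `m` by `x_i`, where
`x_i, x_j ∈ U` and `i < j`. -/
def LBorelStep (n : ℕ) (U : Set (Fin n)) (m m' : Fin n →₀ ℕ) : Prop :=
  ∃ i j : Fin n, i ∈ U ∧ j ∈ U ∧ i < j ∧ 0 < m j ∧
    m' + Finsupp.single j 1 = m + Finsupp.single i 1

/-- `L_U`-Borel(M): all monomials obtainable from `M` by `L_U`-Borel moves
(including `M` itself); this is the minimal generating set of the principal
`L_U`-Borel ideal generated by `M`. -/
def LBorelSet (n : ℕ) (U : Set (Fin n)) (M : Fin n →₀ ℕ) : Set (Fin n →₀ ℕ) :=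
  {m | Relation.ReflTransGen (LBorelStep n U) M m}

/-- The multi-Rees algebra `R[I_1t_1,…,I_rt_r]` of monomial ideals with minimal
generating sets `G_1,…,G_r`: the `K`-subalgebra of `K[x_1,…,x_n,t_1,…,t_r]` generated
by `x_1,…,x_n` together with all `g·t_i`, `g ∈ G_i`. -/
noncomputable def multiRees (K : Type*) [Field K] (n r : ℕ) (G : Fin r → Set (Fin n →₀ ℕ)) :
    Subalgebra K (MvPolynomial (Fin n ⊕ Fin r) K) :=
  Algebra.adjoin K
    ((Set.range fun i : Fin n => (MvPolynomial.X (Sum.inl i) :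
        MvPolynomial (Fin n ⊕ Fin r) K)) ∪
      {p | ∃ i : Fin r, ∃ g ∈ G i,
        p = MvPolynomial.monomial
          (Finsupp.mapDomain Sum.inl g + Finsupp.single (Sum.inr i) 1) (1 : K)})

/-- The multi-fiber ring `K[I_1t_1,…,I_rt_r]`: the `K`-subalgebra of
`K[x_1,…,x_n,t_1,…,t_r]` generated by all `g·t_i`, `g ∈ G_i`. -/
noncomputable def multiFiber (K : Type*) [Field K] (n r : ℕ) (G : Fin r → Set (Fin n →₀ ℕ)) :
    Subalgebra K (MvPolynomial (Fin n ⊕ Fin r) K) :=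
  Algebra.adjoin K
    {p | ∃ i : Fin r, ∃ g ∈ G i,
      p = MvPolynomial.monomial
        (Finsupp.mapDomain Sum.inl g + Finsupp.single (Sum.inr i) 1) (1 : K)}


section Aux

variable {n : ℕ} {U : Set (Fin n)} {mm : Fin n →₀ ℕ}

lemma aux_mm_zero (hmm : ∀ k, 0 < mm k → k ∉ U) {k : Fin n} (hk : k ∈ U) : mm k = 0 := by
  by_contra h
  exact hmm k (Nat.pos_of_ne_zero h) hk

lemma step_shift_fwd (hmm : ∀ k, 0 < mm k → k ∉ U) {a b : Fin n →₀ ℕ}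
    (h : LBorelStep n U a b) : LBorelStep n U (a + mm) (b + mm) := by
  obtain ⟨i, j, hi, hj, hij, hpos, heq⟩ := h
  refine ⟨i, j, hi, hj, hij, ?_, ?_⟩
  · simp only [Finsupp.add_apply]
    omega
  · calc b + mm + Finsupp.single j 1 = b + Finsupp.single j 1 + mm := by
          rw [add_right_comm]
      _ = a + Finsupp.single i 1 + mm := by rw [heq]
      _ = a + mm + Finsupp.single i 1 := by rw [add_right_comm]

lemma step_shift_bwd (hmm : ∀ k, 0 < mm k → k ∉ U) {a c : Fin n →₀ ℕ}
    (h : LBorelStep n U (a + mm) c) : ∃ b, c = b + mm ∧ LBorelStep n U a b := by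
  obtain ⟨i, j, hi, hj, hij, hpos, heq⟩ := h
  have hmmj : mm j = 0 := aux_mm_zero hmm hj
  have hmmi : mm i = 0 := aux_mm_zero hmm hi
  have hne : i ≠ j := ne_of_lt hij
  have happ : ∀ k, c k + (Finsupp.single j 1 : Fin n →₀ ℕ) k
      = a k + mm k + (Finsupp.single i 1 : Fin n →₀ ℕ) k := by
    intro k
    have := DFunLike.congr_fun heq k
    simpa [Finsupp.add_apply] using this
  have hle : mm ≤ c := by
    intro k
    rcases Nat.eq_zero_or_pos (mm k) with h0 | h0
    · simp [h0]
    · have hkU : k ∉ U := hmm k h0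
      have hki : k ≠ i := fun h => hkU (h ▸ hi)
      have hkj : k ≠ j := fun h => hkU (h ▸ hj)
      have := happ k
      rw [Finsupp.single_apply, Finsupp.single_apply, if_neg (fun h => hkj h.symm),
        if_neg (fun h => hki h.symm)] at this
      omega
  refine ⟨c - mm, (tsub_add_cancel_of_le hle).symm, i, j, hi, hj, hij, ?_, ?_⟩
  · have := happ j
    rw [Finsupp.single_apply, Finsupp.single_apply, if_pos rfl, if_neg hne] at this
    have hcj : (c - mm) j = c j - mm j := by simp [Finsupp.tsub_apply]
    omega
  · have hc : c - mm + mm = c := tsub_add_cancel_of_le hle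
    have : c - mm + mm + Finsupp.single j 1 = a + mm + Finsupp.single i 1 := by
      rw [hc]; exact heq
    have h2 : c - mm + Finsupp.single j 1 + mm = a + Finsupp.single i 1 + mm := by
      rw [add_right_comm, this, add_right_comm]
    exact add_right_cancel h2

lemma borel_shift (hmm : ∀ k, 0 < mm k → k ∉ U) (a : Fin n →₀ ℕ) :
    LBorelSet n U (a + mm) = (· + mm) '' LBorelSet n U a := by
  ext x
  constructor
  · intro hx
    induction hx with
    | refl => exact ⟨a, Relation.ReflTransGen.refl, rfl⟩
    | tail _ hstep ih =>
      obtain ⟨g, hg, rfl⟩ := ih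
      obtain ⟨b, rfl, hb⟩ := step_shift_bwd hmm hstep
      exact ⟨b, hg.tail hb, rfl⟩
  · rintro ⟨g, hg, rfl⟩
    exact Relation.ReflTransGen.lift _ (fun _ _ h => step_shift_fwd hmm h) _ _ hg

end Aux

section Hom

variable (K : Type*) [Field K] {n r : ℕ}

/-- substitution target -/
noncomputable def stripF (m : Fin r → (Fin n →₀ ℕ)) : Fin n ⊕ Fin r → MvPolynomial (Fin n ⊕ Fin r) K :=
  Sum.elim (fun j => MvPolynomial.X (Sum.inl j))
    (fun i => MvPolynomial.monomial
      (Finsupp.mapDomain Sum.inl (m i) + Finsupp.single (Sum.inr i) 1) (1 : K))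

noncomputable def stripHom (m : Fin r → (Fin n →₀ ℕ)) :
    MvPolynomial (Fin n ⊕ Fin r) K →ₐ[K] MvPolynomial (Fin n ⊕ Fin r) K :=
  MvPolynomial.aeval (stripF K m)

noncomputable def Tmap (m : Fin r → (Fin n →₀ ℕ)) (u : (Fin n ⊕ Fin r) →₀ ℕ) : (Fin n ⊕ Fin r) →₀ ℕ :=
  u + Finsupp.mapDomain Sum.inl (∑ i : Fin r, u (Sum.inr i) • m i)

lemma Tmap_inj (m : Fin r → (Fin n →₀ ℕ)) : Function.Injective (Tmap m) := by
  intro u v huv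
  have hr : ∀ i : Fin r, u (Sum.inr i) = v (Sum.inr i) := by
    intro i
    have := DFunLike.congr_fun huv (Sum.inr i)
    simp only [Tmap, Finsupp.add_apply] at this
    rw [Finsupp.mapDomain_notin_range _ _ (by simp),
      Finsupp.mapDomain_notin_range _ _ (by simp)] at this
    omega
  have hs : (∑ i : Fin r, u (Sum.inr i) • m i) = ∑ i : Fin r, v (Sum.inr i) • m i := by
    refine Finset.sum_congr rfl fun i _ => by rw [hr i]
  unfold Tmap at huv
  rw [hs] at huv
  exact add_right_cancel huv

lemma Tmap_add (m : Fin r → (Fin n →₀ ℕ)) (u v : (Fin n ⊕ Fin r) →₀ ℕ) :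
    Tmap m (u + v) = Tmap m u + Tmap m v := by
  unfold Tmap
  simp only [Finsupp.add_apply, add_smul, Finset.sum_add_distrib, Finsupp.mapDomain_add]
  abel

lemma Tmap_single_inl (m : Fin r → (Fin n →₀ ℕ)) (j : Fin n) (e : ℕ) :
    Tmap m (Finsupp.single (Sum.inl j) e) = Finsupp.single (Sum.inl j) e := by
  unfold Tmap
  have : ∀ i : Fin r, (Finsupp.single (Sum.inl j) e : (Fin n ⊕ Fin r) →₀ ℕ) (Sum.inr i) = 0 := by
    intro i; simp [Finsupp.single_apply]
  simp [this]

lemma Tmap_single_inr (m : Fin r → (Fin n →₀ ℕ)) (i : Fin r) (e : ℕ) :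
    Tmap m (Finsupp.single (Sum.inr i) e)
      = Finsupp.mapDomain Sum.inl (e • m i) + Finsupp.single (Sum.inr i) e := by
  unfold Tmap
  have hsum : (∑ i' : Fin r,
      (Finsupp.single (Sum.inr i) e : (Fin n ⊕ Fin r) →₀ ℕ) (Sum.inr i') • m i') = e • m i := by
    rw [Finset.sum_eq_single i]
    · simp
    · intro i' _ hne
      have : (Finsupp.single (Sum.inr i) e : (Fin n ⊕ Fin r) →₀ ℕ) (Sum.inr i') = 0 := by
        rw [Finsupp.single_apply, if_neg]
        exact fun h => hne (Sum.inr.inj h).symm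
      simp [this]
    · intro h; exact absurd (Finset.mem_univ i) h
  rw [hsum, add_comm]

lemma stripHom_monomial (m : Fin r → (Fin n →₀ ℕ)) (u : (Fin n ⊕ Fin r) →₀ ℕ) (c : K) :
    stripHom K m (MvPolynomial.monomial u c) = MvPolynomial.monomial (Tmap m u) c := by
  induction u using Finsupp.induction with
  | zero =>
    have : Tmap m 0 = 0 := by unfold Tmap; simp
    rw [this]
    simp only [MvPolynomial.monomial_zero']
    rw [show ((MvPolynomial.C c : MvPolynomial (Fin n ⊕ Fin r) K))
      = algebraMap K _ c from rfl]
    exact AlgHom.commutes _ c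
  | single_add s e v _ _ ih =>
    rw [show Finsupp.single s e + v = v + Finsupp.single s e from add_comm _ _] at *
    rw [← mul_one c, ← MvPolynomial.monomial_mul, map_mul, ih,
      ← MvPolynomial.X_pow_eq_monomial, map_pow, Tmap_add]
    have hX : stripHom K m (MvPolynomial.X s) = stripF K m s := by
      simp [stripHom]
    rw [hX]
    have hfs : stripF K m s = MvPolynomial.monomial
        (Sum.elim (fun j => Finsupp.single (Sum.inl j) 1)
          (fun i => Finsupp.mapDomain Sum.inl (m i) + Finsupp.single (Sum.inr i) 1) s) (1 : K) := by
      cases s with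
      | inl j => simp [stripF, MvPolynomial.X]
      | inr i => simp [stripF]
    rw [hfs, MvPolynomial.monomial_pow, one_pow, MvPolynomial.monomial_mul, mul_one]
    congr 1
    cases s with
    | inl j =>
      rw [Tmap_single_inl]
      simp [Finsupp.smul_single]
    | inr i =>
      rw [Tmap_single_inr]
      simp only [Sum.elim_inr, smul_add, Finsupp.smul_single, smul_eq_mul, mul_one,
        ← Finsupp.mapDomain_smul]

lemma stripHom_eq_mapDomain (m : Fin r → (Fin n →₀ ℕ)) (p : MvPolynomial (Fin n ⊕ Fin r) K) :
    stripHom K m p = AddMonoidAlgebra.mapDomain (Tmap m) p := by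
  induction p using MvPolynomial.induction_on' with
  | monomial u c =>
    rw [stripHom_monomial, ← MvPolynomial.single_eq_monomial,
      show ((MvPolynomial.monomial u c : MvPolynomial (Fin n ⊕ Fin r) K))
        = AddMonoidAlgebra.single u c from (MvPolynomial.single_eq_monomial u c).symm,
      AddMonoidAlgebra.mapDomain_single]
  | add p q hp hq =>
    rw [map_add, hp, hq]
    exact (AddMonoidAlgebra.mapDomain_add _ _ _).symm

lemma stripHom_inj (m : Fin r → (Fin n →₀ ℕ)) : Function.Injective (stripHom K m) := by
  intro p q h
  rw [stripHom_eq_mapDomain, stripHom_eq_mapDomain] at h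
  exact AddMonoidAlgebra.mapDomain_injective (Tmap_inj m) h

lemma Tmap_gen (m : Fin r → (Fin n →₀ ℕ)) (i : Fin r) (g : Fin n →₀ ℕ) :
    Tmap m (Finsupp.mapDomain Sum.inl g + Finsupp.single (Sum.inr i) 1)
      = Finsupp.mapDomain Sum.inl (g + m i) + Finsupp.single (Sum.inr i) 1 := by
  rw [Tmap_add, Tmap_single_inr, one_smul]
  have : Tmap m (Finsupp.mapDomain Sum.inl g) = Finsupp.mapDomain Sum.inl g := by
    unfold Tmap
    have h0 : ∀ i' : Fin r, (Finsupp.mapDomain Sum.inl g : (Fin n ⊕ Fin r) →₀ ℕ) (Sum.inr i') = 0 :=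
      fun i' => Finsupp.mapDomain_notin_range _ _ (by simp)
    simp [h0]
  rw [this, Finsupp.mapDomain_add]
  abel

end Hom

section Main

variable (K : Type*) [Field K] {n r : ℕ}

lemma stripHom_image_X (m : Fin r → (Fin n →₀ ℕ)) :
    stripHom K m '' (Set.range fun i : Fin n => (MvPolynomial.X (Sum.inl i) :
        MvPolynomial (Fin n ⊕ Fin r) K))
      = Set.range fun i : Fin n => (MvPolynomial.X (Sum.inl i) :
        MvPolynomial (Fin n ⊕ Fin r) K) := by
  rw [← Set.range_comp]
  refine congrArg _ (funext fun i => ?_)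
  simp [Function.comp, stripHom, stripF]

lemma stripHom_image_gen (m : Fin r → (Fin n →₀ ℕ)) (G' : Fin r → Set (Fin n →₀ ℕ)) :
    stripHom K m '' {p | ∃ i : Fin r, ∃ g ∈ G' i,
        p = MvPolynomial.monomial
          (Finsupp.mapDomain Sum.inl g + Finsupp.single (Sum.inr i) 1) (1 : K)}
      = {p | ∃ i : Fin r, ∃ g ∈ (· + m i) '' G' i,
        p = MvPolynomial.monomial
          (Finsupp.mapDomain Sum.inl g + Finsupp.single (Sum.inr i) 1) (1 : K)} := by
  ext p
  simp only [Set.mem_image, Set.mem_setOf_eq]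
  constructor
  · rintro ⟨q, ⟨i, g, hg, rfl⟩, rfl⟩
    exact ⟨i, g + m i, ⟨g, hg, rfl⟩, by rw [stripHom_monomial, Tmap_gen]⟩
  · rintro ⟨i, _, ⟨g, hg, rfl⟩, rfl⟩
    exact ⟨MvPolynomial.monomial
        (Finsupp.mapDomain Sum.inl g + Finsupp.single (Sum.inr i) 1) (1 : K),
      ⟨i, g, hg, rfl⟩, by rw [stripHom_monomial, Tmap_gen]⟩

end Main

/-- Proposition 6.2: let `M_i = M'_i·m_i` where every variable dividing `M'_i` lies in
`E_i` and no variable dividing `m_i` lies in `E_i`.  Then the multi-Rees algebras of the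
principal `L_{E_i}`-Borel ideals generated by the `M_i` and by the `M'_i` are isomorphic
as `K`-algebras, as are the corresponding multi-fiber rings. -/
theorem multiRees_strip_inessential
    (K : Type*) [Field K] {n r : ℕ}
    (E : Fin r → Set (Fin n)) (M' m : Fin r → (Fin n →₀ ℕ))
    (hM' : ∀ (i : Fin r) (j : Fin n), 0 < M' i j → j ∈ E i)
    (hm : ∀ (i : Fin r) (j : Fin n), 0 < m i j → j ∉ E i) :
    Nonempty ((multiRees K n r fun i => LBorelSet n (E i) (M' i + m i)) ≃ₐ[K]
        (multiRees K n r fun i => LBorelSet n (E i) (M' i))) ∧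
    Nonempty ((multiFiber K n r fun i => LBorelSet n (E i) (M' i + m i)) ≃ₐ[K]
        (multiFiber K n r fun i => LBorelSet n (E i) (M' i))) := by
  have hG : ∀ i, LBorelSet n (E i) (M' i + m i) = (· + m i) '' LBorelSet n (E i) (M' i) :=
    fun i => borel_shift (hm i) (M' i)
  have hrees : (multiRees K n r fun i => LBorelSet n (E i) (M' i + m i))
      = (multiRees K n r fun i => LBorelSet n (E i) (M' i)).map (stripHom K m) := by
    rw [multiRees, multiRees, AlgHom.map_adjoin, Set.image_union, stripHom_image_X,
      stripHom_image_gen]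
    simp only [hG]
  have hfiber : (multiFiber K n r fun i => LBorelSet n (E i) (M' i + m i))
      = (multiFiber K n r fun i => LBorelSet n (E i) (M' i)).map (stripHom K m) := by
    rw [multiFiber, multiFiber, AlgHom.map_adjoin, stripHom_image_gen]
    simp only [hG]
  exact ⟨⟨(Subalgebra.equivOfEq _ _ hrees).trans
      (Subalgebra.equivMapOfInjective _ (stripHom K m) (stripHom_inj K m)).symm⟩,
    ⟨(Subalgebra.equivOfEq _ _ hfiber).trans
      (Subalgebra.equivMapOfInjective _ (stripHom K m) (stripHom_inj K m)).symm⟩⟩
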